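/- Final absorption step: let H be a k-partite k-graph with classes of size n, M' a matching such that for every type-1 set S at least t > k² edges of M' are S-absorbing, and M ⊇ M' a matching with |V(H) - V(M)| ∩ V_1 of size u where 2 ≤ u ≤ k². Then H contains a matching of size |M| + u - 1, i.e., leaving at most one uncovered vertex per class. -/

import Mathlib

private lemma stmt18_pick {β : Type*} [DecidableEq β] (M' D : Finset β) {p : β → Prop}
    {inst : DecidablePred p} (t : ℕ) (h : t ≤ (@Finset.filter β p inst M').card)
    (hD : D.card < t) : ∃ e, e ∈ M' ∧ e ∉ D ∧ p e := by
  have hne : ((@Finset.filter β p inst M') \ D).Nonempty := by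
    rw [Finset.sdiff_nonempty]
    intro hsub
    have := Finset.card_le_card hsub
    omega
  obtain ⟨e, he⟩ := hne
  rw [Finset.mem_sdiff] at he
  have h2 := (@Finset.mem_filter β p inst M' e).mp he.1
  exact ⟨e, h2.1, he.2, h2.2⟩

/-- final absorption step: if M' is a matching such that every type-1
set S has at least t > k² S-absorbing edges in M', and M ⊇ M' is a matching leaving
u uncovered vertices in V_1 with 2 ≤ u ≤ k², then H has a matching of size
|M| + u - 1 (leaving at most one uncovered vertex per class). -/
theorem stmt18 {α : Type*} [Fintype α] [DecidableEq α]
    (k n : ℕ) (hk : 3 ≤ k)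
    (P : Fin k → Finset α)
    (hP : ∀ v : α, ∃! i, v ∈ P i)
    (hPcard : ∀ i, (P i).card = n)
    (E : Finset (Finset α))
    (hE : ∀ e ∈ E, ∀ i, (e ∩ P i).card = 1)
    (M' M : Finset (Finset α)) (hM'M : M' ⊆ M) (hME : M ⊆ E)
    (hMd : ∀ a ∈ M, ∀ b ∈ M, a ≠ b → Disjoint a b)
    (t : ℕ) (ht : k^2 < t)
    (habs : ∀ S : Finset α,
      (S ∩ P ⟨0, by omega⟩).card = 2 →
      (∀ i, i ≠ (⟨0, by omega⟩ : Fin k) → (S ∩ P i).card = 1) →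
      t ≤ (M'.filter (fun e =>
        Disjoint e S ∧ ∃ r : Fin k, r ≠ (⟨0, by omega⟩ : Fin k) ∧
          ∃ v ∈ S ∩ P ⟨0, by omega⟩,
            ((S \ {v}) \ P r ∪ (e ∩ P r)) ∈ E ∧
            (((e \ P ⟨0, by omega⟩) \ P r) ∪ {v} ∪ (S ∩ P r)) ∈ E)).card)
    (u : ℕ) (hu : u = (P ⟨0, by omega⟩ \ M.biUnion id).card)
    (hu2 : 2 ≤ u) (hu3 : u ≤ k^2) :
    ∃ N ⊆ E, (∀ a ∈ N, ∀ b ∈ N, a ≠ b → Disjoint a b) ∧ N.card = M.card + u - 1 := by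
  classical
  have hk0 : 0 < k := by omega
  set z : Fin k := ⟨0, hk0⟩ with hzdef
  -- each vertex lies in a unique class
  have huniq : ∀ (v : α) (i j : Fin k), v ∈ P i → v ∈ P j → i = j := by
    intro v i j hi hj
    obtain ⟨w, _, hwu⟩ := hP v
    rw [hwu i hi, hwu j hj]
  -- counting lemma: a matching N leaves n - |N| uncovered vertices in each class
  have cardA : ∀ N : Finset (Finset α), N ⊆ E →
      (∀ a ∈ N, ∀ b ∈ N, a ≠ b → Disjoint a b) →
      ∀ i, (P i \ N.biUnion id).card + N.card = n := by
    intro N hNE hNd i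
    have h1 : P i ∩ N.biUnion id = N.biUnion (fun e => P i ∩ e) := by
      ext x
      simp only [Finset.mem_inter, Finset.mem_biUnion, id_eq]
      constructor
      · rintro ⟨hx, e, he, hxe⟩; exact ⟨e, he, hx, hxe⟩
      · rintro ⟨e, he, hx, hxe⟩; exact ⟨hx, e, he, hxe⟩
    have h2 : (N.biUnion (fun e => P i ∩ e)).card = N.card := by
      rw [Finset.card_biUnion]
      · calc ∑ e ∈ N, (P i ∩ e).card = ∑ e ∈ N, 1 := by
              apply Finset.sum_congr rfl
              intro e he
              rw [Finset.inter_comm]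
              exact hE e (hNE he) i
          _ = N.card := by simp
      · intro a ha b hb hab
        exact (hNd a ha b hb hab).mono Finset.inter_subset_right
          Finset.inter_subset_right
    have h3 := Finset.card_inter_add_card_sdiff (P i) (N.biUnion id)
    rw [h1, h2] at h3
    have := hPcard i
    omega
  have hu' : u = (P z \ M.biUnion id).card := hu
  have hun : u + M.card = n := by
    have := cardA M hME hMd z
    omega
  -- main induction: we can absorb j times
  have key : ∀ j, j + 1 ≤ u →
      ∃ N D : Finset (Finset α), N ⊆ E ∧
        (∀ a ∈ N, ∀ b ∈ N, a ≠ b → Disjoint a b) ∧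
        N.card = M.card + j ∧ D ⊆ M' ∧ D.card ≤ j ∧ M' \ D ⊆ N := by
    intro j
    induction j with
    | zero =>
      intro _
      exact ⟨M, ∅, hME, hMd, by simp, by simp, by simp,
        by simpa using hM'M⟩
    | succ j ih =>
      intro hj
      obtain ⟨N, D, hNE, hNd, hNcard, hDM', hDcard, hMN⟩ := ih (by omega)
      set bU := N.biUnion id with hbU
      have hcov : ∀ i, (P i \ bU).card + j = u := by
        intro i
        have h := cardA N hNE hNd i
        rw [← hbU] at h
        omega
      -- pick two uncovered vertices in class z
      have hz2 : 1 < (P z \ bU).card := by have := hcov z; omega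
      obtain ⟨a, ha, b, hb, hab⟩ := Finset.one_lt_card.mp hz2
      -- pick an uncovered vertex in each other class
      have hcne : ∀ i : Fin k, ∃ x, i ≠ z → x ∈ P i \ bU := by
        intro i
        by_cases h : i = z
        · exact ⟨a, fun h' => absurd h h'⟩
        · have hpos : 0 < (P i \ bU).card := by have := hcov i; omega
          obtain ⟨x, hx⟩ := Finset.card_pos.mp hpos
          exact ⟨x, fun _ => hx⟩
      choose c hc using hcne
      set S : Finset α := insert a (insert b ((Finset.univ.erase z).image c)) with hSdef
      have hmemS : ∀ x, x ∈ S ↔ x = a ∨ x = b ∨ ∃ i, i ≠ z ∧ c i = x := by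
        intro x
        simp [hSdef, Finset.mem_image, Finset.mem_erase]
      have haP : a ∈ P z := (Finset.mem_sdiff.mp ha).1
      have hbP : b ∈ P z := (Finset.mem_sdiff.mp hb).1
      have haU : a ∉ bU := (Finset.mem_sdiff.mp ha).2
      have hbU' : b ∉ bU := (Finset.mem_sdiff.mp hb).2
      have hcP : ∀ i : Fin k, i ≠ z → c i ∈ P i := fun i hi => (Finset.mem_sdiff.mp (hc i hi)).1
      have hcU : ∀ i : Fin k, i ≠ z → c i ∉ bU := fun i hi => (Finset.mem_sdiff.mp (hc i hi)).2
      -- S is disjoint from everything covered by N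
      have hSbU : ∀ x ∈ S, x ∉ bU := by
        intro x hx
        rcases (hmemS x).mp hx with rfl | rfl | ⟨i, hi, rfl⟩
        · exact haU
        · exact hbU'
        · exact hcU i hi
      -- class structure of S
      have hSz : S ∩ P z = {a, b} := by
        ext x
        simp only [Finset.mem_inter, Finset.mem_insert, Finset.mem_singleton]
        constructor
        · rintro ⟨hxS, hxP⟩
          rcases (hmemS x).mp hxS with rfl | rfl | ⟨i, hi, rfl⟩
          · exact Or.inl rfl
          · exact Or.inr rfl
          · exact absurd (huniq _ _ _ (hcP i hi) hxP) hi
        · rintro (rfl | rfl)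
          · exact ⟨(hmemS _).mpr (Or.inl rfl), haP⟩
          · exact ⟨(hmemS _).mpr (Or.inr (Or.inl rfl)), hbP⟩
      have hSzcard : (S ∩ P z).card = 2 := by
        rw [hSz]
        rw [Finset.card_insert_of_notMem (by simpa using hab), Finset.card_singleton]
      have hSi : ∀ i : Fin k, i ≠ z → S ∩ P i = {c i} := by
        intro i hi
        ext x
        simp only [Finset.mem_inter, Finset.mem_singleton]
        constructor
        · rintro ⟨hxS, hxP⟩
          rcases (hmemS x).mp hxS with rfl | rfl | ⟨i', hi', rfl⟩
          · exact absurd (huniq _ _ _ haP hxP) (Ne.symm hi)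
          · exact absurd (huniq _ _ _ hbP hxP) (Ne.symm hi)
          · rw [huniq _ _ _ (hcP i' hi') hxP]
        · rintro rfl
          exact ⟨(hmemS _).mpr (Or.inr (Or.inr ⟨i, hi, rfl⟩)), hcP i hi⟩
      have hSicard : ∀ i : Fin k, i ≠ z → (S ∩ P i).card = 1 := by
        intro i hi; rw [hSi i hi]; exact Finset.card_singleton _
      -- get a fresh absorbing edge
      obtain ⟨e, heM', heD, hp⟩ :=
        stmt18_pick M' D t (habs S hSzcard hSicard) (by omega)
      obtain ⟨heSdisj, r, hr, v, hvS, hSeE, heSE⟩ := hp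
      have heN : e ∈ N := hMN (Finset.mem_sdiff.mpr ⟨heM', heD⟩)
      -- names for the two new edges
      set Se : Finset α := (S \ {v}) \ P r ∪ (e ∩ P r) with hSe
      set eS : Finset α := ((e \ P z) \ P r) ∪ {v} ∪ (S ∩ P r) with heS
      have hvS' : v ∈ S := (Finset.mem_inter.mp hvS).1
      have hvPz : v ∈ P z := (Finset.mem_inter.mp hvS).2
      -- disjointness of e and S pointwise
      have hdisj : ∀ x ∈ S, x ∉ e := by
        intro x hx hxe
        exact (Finset.disjoint_right.mp heSdisj) hx hxe
      -- the other uncovered vertex of S in class z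
      have hw : ∃ w, w ∈ S ∧ w ∈ P z ∧ w ≠ v := by
        have hv2 : v ∈ ({a, b} : Finset α) := by rw [← hSz]; exact hvS
        rcases Finset.mem_insert.mp hv2 with rfl | hv2'
        · exact ⟨b, (hmemS b).mpr (Or.inr (Or.inl rfl)), hbP, fun h => hab h.symm⟩
        · rw [Finset.mem_singleton] at hv2'
          subst hv2'
          exact ⟨a, (hmemS a).mpr (Or.inl rfl), haP, hab⟩
      obtain ⟨w, hwS, hwPz, hwv⟩ := hw
      have hrz : ∀ x : α, x ∈ P z → x ∉ P r := by
        intro x h1 h2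
        exact hr (huniq _ _ _ h2 h1)
      -- membership characterizations
      have hmemSe : ∀ x, x ∈ Se ↔ ((x ∈ S ∧ x ≠ v ∧ x ∉ P r) ∨ (x ∈ e ∧ x ∈ P r)) := by
        intro x
        simp [hSe, Finset.mem_union, Finset.mem_sdiff, Finset.mem_inter, and_assoc]
      have hmemeS : ∀ x, x ∈ eS ↔
          ((x ∈ e ∧ x ∉ P z ∧ x ∉ P r) ∨ x = v ∨ (x ∈ S ∧ x ∈ P r)) := by
        intro x
        simp [heS, Finset.mem_union, Finset.mem_sdiff, Finset.mem_inter, and_assoc, or_assoc]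
        exact or_left_comm
      have hwSe : w ∈ Se := (hmemSe w).mpr (Or.inl ⟨hwS, hwv, hrz w hwPz⟩)
      have hveS : v ∈ eS := (hmemeS v).mpr (Or.inr (Or.inl rfl))
      have hwneS : w ∉ eS := by
        intro h
        rcases (hmemeS w).mp h with ⟨h1, _, _⟩ | h1 | ⟨h1, h2⟩
        · exact hdisj w hwS h1
        · exact hwv h1
        · exact hrz w hwPz h2
      -- Se and eS are disjoint
      have hSeeS : Disjoint Se eS := by
        rw [Finset.disjoint_left]
        intro x hx hx'
        rcases (hmemSe x).mp hx with ⟨h1, h2, h3⟩ | ⟨h1, h2⟩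
        · rcases (hmemeS x).mp hx' with ⟨h4, _, _⟩ | h4 | ⟨_, h4⟩
          · exact hdisj x h1 h4
          · exact h2 h4
          · exact h3 h4
        · rcases (hmemeS x).mp hx' with ⟨_, _, h4⟩ | h4 | ⟨h4, _⟩
          · exact h4 h2
          · exact hdisj x (h4 ▸ hvS') h1
          · exact hdisj x h4 h1
      -- Se and eS are contained in S ∪ e
      have hSesub : ∀ x ∈ Se, x ∈ S ∨ x ∈ e := by
        intro x hx
        rcases (hmemSe x).mp hx with ⟨h1, _, _⟩ | ⟨h1, _⟩
        · exact Or.inl h1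
        · exact Or.inr h1
      have heSsub : ∀ x ∈ eS, x ∈ S ∨ x ∈ e := by
        intro x hx
        rcases (hmemeS x).mp hx with ⟨h1, _, _⟩ | h1 | ⟨h1, _⟩
        · exact Or.inr h1
        · exact Or.inl (h1 ▸ hvS')
        · exact Or.inl h1
      -- every other edge of N is disjoint from S ∪ e
      have hother : ∀ f ∈ N.erase e, ∀ x, (x ∈ S ∨ x ∈ e) → x ∉ f := by
        intro f hf x hx hxf
        have hfN : f ∈ N := Finset.mem_of_mem_erase hf
        have hfe : f ≠ e := Finset.ne_of_mem_erase hf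
        rcases hx with hx | hx
        · exact hSbU x hx (Finset.mem_biUnion.mpr ⟨f, hfN, hxf⟩)
        · exact (Finset.disjoint_left.mp (hNd f hfN e heN hfe)) hxf hx
      -- new edges are not old edges
      have hSeN : Se ∉ N := by
        intro h
        exact hSbU w hwS (Finset.mem_biUnion.mpr ⟨Se, h, hwSe⟩)
      have heSN : eS ∉ N := by
        intro h
        exact hSbU v hvS' (Finset.mem_biUnion.mpr ⟨eS, h, hveS⟩)
      have hSeeS' : Se ≠ eS := by
        intro h
        exact hwneS (h ▸ hwSe)
      -- the new matching
      refine ⟨insert Se (insert eS (N.erase e)), insert e D, ?_, ?_, ?_, ?_, ?_, ?_⟩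
      · -- ⊆ E
        intro f hf
        rcases Finset.mem_insert.mp hf with rfl | hf
        · exact hSeE
        rcases Finset.mem_insert.mp hf with rfl | hf
        · exact heSE
        · exact hNE (Finset.mem_of_mem_erase hf)
      · -- pairwise disjoint
        intro f hf g hg hfg
        rcases Finset.mem_insert.mp hf with rfl | hf
        · rcases Finset.mem_insert.mp hg with rfl | hg
          · exact absurd rfl hfg
          rcases Finset.mem_insert.mp hg with rfl | hg
          · exact hSeeS
          · exact Finset.disjoint_left.mpr fun x hx hxg =>
              hother g hg x (hSesub x hx) hxg
        rcases Finset.mem_insert.mp hf with rfl | hf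
        · rcases Finset.mem_insert.mp hg with rfl | hg
          · exact hSeeS.symm
          rcases Finset.mem_insert.mp hg with rfl | hg
          · exact absurd rfl hfg
          · exact Finset.disjoint_left.mpr fun x hx hxg =>
              hother g hg x (heSsub x hx) hxg
        · rcases Finset.mem_insert.mp hg with rfl | hg
          · exact Finset.disjoint_right.mpr fun x hx hxf =>
              hother f hf x (hSesub x hx) hxf
          rcases Finset.mem_insert.mp hg with rfl | hg
          · exact Finset.disjoint_right.mpr fun x hx hxf =>
              hother f hf x (heSsub x hx) hxf
          · exact hNd f (Finset.mem_of_mem_erase hf) g (Finset.mem_of_mem_erase hg) hfg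
      · -- cardinality
        have h1 : Se ∉ insert eS (N.erase e) := by
          intro h
          rcases Finset.mem_insert.mp h with h | h
          · exact hSeeS' h
          · exact hSeN (Finset.mem_of_mem_erase h)
        have h2 : eS ∉ N.erase e := fun h => heSN (Finset.mem_of_mem_erase h)
        rw [Finset.card_insert_of_notMem h1, Finset.card_insert_of_notMem h2,
          Finset.card_erase_of_mem heN]
        have : 1 ≤ N.card := Finset.card_pos.mpr ⟨e, heN⟩
        omega
      · -- D' ⊆ M'
        intro f hf
        rcases Finset.mem_insert.mp hf with rfl | hf
        · exact heM'
        · exact hDM' hf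
      · -- card D' ≤ j + 1
        calc (insert e D).card ≤ D.card + 1 := Finset.card_insert_le e D
          _ ≤ j + 1 := by omega
      · -- M' \ D' ⊆ N'
        intro f hf
        obtain ⟨hfM', hfD'⟩ := Finset.mem_sdiff.mp hf
        have hfe : f ≠ e := fun h => hfD' (h ▸ Finset.mem_insert_self e D)
        have hfD : f ∉ D := fun h => hfD' (Finset.mem_insert_of_mem h)
        have hfN : f ∈ N := hMN (Finset.mem_sdiff.mpr ⟨hfM', hfD⟩)
        exact Finset.mem_insert_of_mem (Finset.mem_insert_of_mem
          (Finset.mem_erase.mpr ⟨hfe, hfN⟩))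
  -- conclude
  obtain ⟨N, D, hNE, hNd, hNcard, _, _, _⟩ := key (u - 1) (by omega)
  exact ⟨N, hNE, hNd, by omega⟩
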